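/- Let (G, p) be a probabilistic graph and let A, B ∈ V be distinct vertices that are mono-connected, with unique path π = (A = v_0, v_1, …, v_k = B). Then the reachability probability between A and B equals the product of the edge probabilities along π: P(A↔B) = ∏_{i=0}^{k−1} p({v_i, v_{i+1}}). -/

import Mathlib

open Finset

/-- Probability of the possible world `F` of a probabilistic graph with edge set `E`
and edge-probability function `p`: each edge exists independently with probability `p e`. -/
noncomputable def worldProb {V : Type*} [DecidableEq V]
    (p : Sym2 V → ℝ) (E F : Finset (Sym2 V)) : ℝ :=
  (∏ e ∈ F, p e) * ∏ e ∈ E \ F, (1 - p e)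

open scoped Classical in
/-- Reachability probability `P(A ↔ B)`: the total probability of the possible worlds
`F ⊆ E` in which `A` and `B` are connected in the spanning subgraph `(V, F)`. -/
noncomputable def reachProb {V : Type*} [DecidableEq V]
    (p : Sym2 V → ℝ) (E : Finset (Sym2 V)) (A B : V) : ℝ :=
  ∑ F ∈ E.powerset,
    if (SimpleGraph.fromEdgeSet (↑F : Set (Sym2 V))).Reachable A B then worldProb p E F else 0

open scoped Classical in
/-- Information flow to `Q` in the possible world `F`: total weight of the vertices
connected to `Q` in the spanning subgraph `(V, F)` (`Q` itself counted). -/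
noncomputable def flowW {V : Type*} [Fintype V]
    (W : V → ℝ) (Q : V) (F : Finset (Sym2 V)) : ℝ :=
  ∑ v : V, if (SimpleGraph.fromEdgeSet (↑F : Set (Sym2 V))).Reachable Q v then W v else 0

/-- Expected information flow to `Q` in the probabilistic graph with edge set `E`. -/
noncomputable def expFlow {V : Type*} [Fintype V] [DecidableEq V]
    (p : Sym2 V → ℝ) (E : Finset (Sym2 V)) (W : V → ℝ) (Q : V) : ℝ :=
  ∑ F ∈ E.powerset, worldProb p E F * flowW W Q F

/-- if `A ≠ B` are mono-connected in the probabilistic graph `(G, p)`,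
with unique path `π`, then the reachability probability between `A` and `B` equals
the product of the edge probabilities along `π`. -/
theorem reachProb_eq_prod_of_unique_path {V : Type*} [Fintype V] [DecidableEq V]
    (G : SimpleGraph V) [DecidableRel G.Adj]
    (p : Sym2 V → ℝ) (hp : ∀ e ∈ G.edgeSet, 0 ≤ p e ∧ p e ≤ 1)
    (A B : V) (hAB : A ≠ B)
    (π : G.Walk A B) (hπ : π.IsPath)
    (huniq : ∀ w : G.Walk A B, w.IsPath → w = π) :
    reachProb p G.edgeFinset A B = (π.edges.map p).prod := by
  classical
  set E := G.edgeFinset with hE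
  set S : Finset (Sym2 V) := π.edges.toFinset with hS
  have hSE : S ⊆ E := by
    intro e he
    rw [hS, List.mem_toFinset] at he
    rw [hE, SimpleGraph.mem_edgeFinset]
    exact π.edges_subset_edgeSet he
  -- Step 1 : reachability in world F ↔ S ⊆ F
  have hiff : ∀ F ∈ E.powerset,
      ((SimpleGraph.fromEdgeSet (↑F : Set (Sym2 V))).Reachable A B ↔ S ⊆ F) := by
    intro F hF
    rw [Finset.mem_powerset] at hF
    have hle : SimpleGraph.fromEdgeSet (↑F : Set (Sym2 V)) ≤ G := by
      rw [← SimpleGraph.fromEdgeSet_edgeSet G]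
      refine SimpleGraph.fromEdgeSet_mono ?_
      intro e he
      rw [← G.coe_edgeFinset]
      exact_mod_cast hF he
    constructor
    · rintro ⟨w⟩
      have q := w.toPath
      have hq : ((q : (SimpleGraph.fromEdgeSet (↑F : Set (Sym2 V))).Walk A B).mapLe hle).IsPath :=
        (SimpleGraph.Walk.mapLe_isPath hle).2 q.2
      have heq := huniq _ hq
      have hedges : π.edges = (q : (SimpleGraph.fromEdgeSet (↑F : Set (Sym2 V))).Walk A B).edges := by
        rw [← heq]
        have hid : ⇑(SimpleGraph.Hom.ofLE hle) = id := rfl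
        simp [SimpleGraph.Walk.mapLe, SimpleGraph.Walk.edges_map, hid, Sym2.map_id]
      intro e he
      rw [hS, List.mem_toFinset, hedges] at he
      have := SimpleGraph.Walk.edges_subset_edgeSet _ he
      rw [SimpleGraph.edgeSet_fromEdgeSet] at this
      exact_mod_cast this.1
    · intro hSF
      refine ⟨π.transfer _ ?_⟩
      intro e he
      rw [SimpleGraph.edgeSet_fromEdgeSet]
      refine ⟨?_, G.not_isDiag_of_mem_edgeSet (π.edges_subset_edgeSet he)⟩
      exact_mod_cast hSF (by rw [hS, List.mem_toFinset]; exact he)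
  -- Step 2 : rewrite the sum
  have h1 : reachProb p E A B = ∑ F ∈ E.powerset, (if S ⊆ F then worldProb p E F else 0) := by
    rw [reachProb]
    refine Finset.sum_congr rfl fun F hF => ?_
    simp [hiff F hF]
  -- Step 3 : reindex over subsets of E \ S
  have h2 : ∑ F ∈ E.powerset, (if S ⊆ F then worldProb p E F else 0)
      = ∑ F' ∈ (E \ S).powerset, worldProb p E (S ∪ F') := by
    rw [← Finset.sum_filter]
    refine Finset.sum_nbij' (fun F => F \ S) (fun F' => S ∪ F') ?_ ?_ ?_ ?_ ?_
    · intro F hF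
      simp only [Finset.mem_filter, Finset.mem_powerset] at hF
      rw [Finset.mem_powerset]
      exact Finset.sdiff_subset_sdiff hF.1 (le_refl S)
    · intro F' hF'
      rw [Finset.mem_powerset] at hF'
      simp only [Finset.mem_filter, Finset.mem_powerset]
      exact ⟨Finset.union_subset hSE (hF'.trans Finset.sdiff_subset), Finset.subset_union_left⟩
    · intro F hF
      simp only [Finset.mem_filter, Finset.mem_powerset] at hF
      exact Finset.union_sdiff_of_subset hF.2
    · intro F' hF'
      rw [Finset.mem_powerset] at hF'
      exact Finset.union_sdiff_cancel_left
        (Finset.disjoint_left.2 fun e heS heF' => (Finset.mem_sdiff.1 (hF' heF')).2 heS)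
    · intro F hF
      simp only [Finset.mem_filter, Finset.mem_powerset] at hF
      rw [Finset.union_sdiff_of_subset hF.2]
  -- Step 4 : evaluate
  have h3 : ∑ F' ∈ (E \ S).powerset, worldProb p E (S ∪ F') = ∏ e ∈ S, p e := by
    have key : ∀ F' ∈ (E \ S).powerset,
        worldProb p E (S ∪ F')
          = (∏ e ∈ S, p e) * ((∏ e ∈ F', p e) * ∏ e ∈ (E \ S) \ F', (1 - p e)) := by
      intro F' hF'
      rw [Finset.mem_powerset] at hF'
      have hdisj : Disjoint S F' :=
        Finset.disjoint_left.2 fun e heS heF' => (Finset.mem_sdiff.1 (hF' heF')).2 heS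
      have hsd : E \ (S ∪ F') = (E \ S) \ F' := by
        ext e; simp only [Finset.mem_sdiff, Finset.mem_union]; tauto
      rw [worldProb, Finset.prod_union hdisj, hsd]; ring
    rw [Finset.sum_congr rfl key, ← Finset.mul_sum, ← Finset.prod_add]
    simp
  rw [h1, h2, h3, hS]
  exact List.prod_toFinset p hπ.edges_nodup
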